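/- Let q be a prime power, k < n ≤ m, α_1,...,α_n ∈ F_{q^m} linearly independent over F_q, η₁, η₂ ∈ F_{q^m}*, 0 ≤ h ≤ k-1, 0 ≤ t₁ < t₂ ≤ n-k-1. The twisted Gabidulin code C₂ with two twists (generator matrix: Moore matrix rows (α_j^{q^i})_j for i ≠ h, and row h replaced by (α_j^{q^h} + η₁ α_j^{q^{k+t₁}} + η₂ α_j^{q^{k+t₂}})_j) is MRD if and only if for every full-rank V ∈ F_q^{k×n}: η₁ det(V·M^{(h,k+t₁)ᵀ}) + η₂ det(V·M^{(h,k+t₂)ᵀ}) ≠ -det(V·Mᵀ), where M is the k×n Moore matrix of α and M^{(h,s)} is M with row h replaced by (α_j^{q^s})_j. -/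

import Mathlib

set_option linter.unusedSectionVars false

open Finset

section Aux

variable {Fq K : Type*} [Field Fq] [Fintype Fq] [Field K] [Algebra Fq K]

lemma aux_add_pow (x y : K) (s : ℕ) :
    (x + y) ^ Fintype.card Fq ^ s = x ^ Fintype.card Fq ^ s + y ^ Fintype.card Fq ^ s := by
  haveI : CharP K (ringChar Fq) :=
    charP_of_injective_algebraMap (algebraMap Fq K).injective (ringChar Fq)
  haveI : Fact (ringChar Fq).Prime := ⟨CharP.char_is_prime Fq (ringChar Fq)⟩
  obtain ⟨e, hp, hcard⟩ := FiniteField.card Fq (ringChar Fq)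
  rw [hcard, ← pow_mul]
  exact add_pow_char_pow x y _ _

lemma aux_smul_pow (a : Fq) (x : K) (s : ℕ) :
    (a • x) ^ Fintype.card Fq ^ s = a • x ^ Fintype.card Fq ^ s := by
  rw [Algebra.smul_def, Algebra.smul_def, mul_pow, ← map_pow, FiniteField.pow_card_pow]

/-- The `q^s`-power Frobenius as an `Fq`-linear map on `K`. -/
noncomputable def frobLin (Fq : Type*) {K : Type*} [Field Fq] [Fintype Fq] [Field K]
    [Algebra Fq K] (s : ℕ) : K →ₗ[Fq] K where
  toFun x := x ^ Fintype.card Fq ^ s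
  map_add' x y := aux_add_pow x y s
  map_smul' a x := by simpa using aux_smul_pow a x s

@[simp] lemma frobLin_apply (s : ℕ) (x : K) :
    frobLin Fq s x = x ^ Fintype.card Fq ^ s := rfl

/-- The `Fq`-linear evaluation map associated to a vector `c`. -/
noncomputable def annMap {n : ℕ} (c : Fin n → K) : (Fin n → Fq) →ₗ[Fq] K where
  toFun v := ∑ j, v j • c j
  map_add' u v := by simp [add_smul, Finset.sum_add_distrib]
  map_smul' a v := by simp [smul_smul, Finset.smul_sum]

@[simp] lemma annMap_apply {n : ℕ} (c : Fin n → K) (v : Fin n → Fq) :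
    annMap c v = ∑ j, v j • c j := rfl

lemma range_annMap {n : ℕ} (c : Fin n → K) :
    LinearMap.range (annMap (Fq := Fq) c) = Submodule.span Fq (Set.range c) := by
  apply le_antisymm
  · rintro _ ⟨v, rfl⟩
    rw [annMap_apply]
    exact Submodule.sum_mem _ fun j _ =>
      Submodule.smul_mem _ _ (Submodule.subset_span (Set.mem_range_self j))
  · rw [Submodule.span_le]
    rintro _ ⟨j, rfl⟩
    rw [SetLike.mem_coe, LinearMap.mem_range]
    exact ⟨Pi.single j 1, by simp [Pi.single_apply, ite_smul]⟩

lemma weight_add_le {n r : ℕ} (c : Fin n → K) (W : Fin r → (Fin n → Fq))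
    (hW : LinearIndependent Fq W) (hann : ∀ i, ∑ j, W i j • c j = 0) :
    Module.finrank Fq (Submodule.span Fq (Set.range c)) + r ≤ n := by
  have h1 := (annMap (Fq := Fq) c).finrank_range_add_finrank_ker
  rw [range_annMap, Module.finrank_pi, Fintype.card_fin] at h1
  have h2 : r ≤ Module.finrank Fq (LinearMap.ker (annMap (Fq := Fq) c)) := by
    have hli : LinearIndependent Fq
        (fun i => (⟨W i, by simpa using hann i⟩ : LinearMap.ker (annMap (Fq := Fq) c))) := by
      apply LinearIndependent.of_comp (LinearMap.ker (annMap (Fq := Fq) c)).subtype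
      exact hW
    simpa using hli.fintype_card_le_finrank
  omega

lemma exists_ann_of_weight_le {n r : ℕ} (c : Fin n → K)
    (hw : Module.finrank Fq (Submodule.span Fq (Set.range c)) + r ≤ n) :
    ∃ W : Fin r → (Fin n → Fq), LinearIndependent Fq W ∧ ∀ i, ∑ j, W i j • c j = 0 := by
  have h1 := (annMap (Fq := Fq) c).finrank_range_add_finrank_ker
  rw [range_annMap, Module.finrank_pi, Fintype.card_fin] at h1
  have hr : r ≤ Module.finrank Fq (LinearMap.ker (annMap (Fq := Fq) c)) := by omega
  let b := Module.finBasis Fq (LinearMap.ker (annMap (Fq := Fq) c))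
  refine ⟨fun i => (b (Fin.castLE hr i) : Fin n → Fq), ?_, ?_⟩
  · exact ((b.linearIndependent.comp _ (Fin.castLE_injective hr)).map'
      (Submodule.subtype _) (Submodule.ker_subtype _))
  · intro i
    exact LinearMap.mem_ker.mp (b (Fin.castLE hr i)).2

lemma rank_eq_iff_rows_li {n k : ℕ} (V : Matrix (Fin k) (Fin n) Fq) :
    V.rank = k ↔ LinearIndependent Fq (fun i => V i) := by
  rw [← Matrix.rank_transpose, Matrix.rank_eq_finrank_span_cols, Matrix.col_transpose,
    linearIndependent_iff_card_eq_finrank_span]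
  simp only [Set.finrank, Fintype.card_fin]
  exact eq_comm

end Aux

section Rows

variable {Fq K : Type*} [Field Fq] [Fintype Fq] [Field K] [Fintype K] [Algebra Fq K]

open Polynomial

lemma rowsLI (q n k h t₁ t₂ : ℕ) (hq : Fintype.card Fq = q)
    (hkn : k < n) (hh : h < k) (ht : t₁ < t₂) (ht₂ : t₂ < n - k)
    (α : ℕ → K) (hα : LinearIndependent Fq (fun i : Fin n => α (i : ℕ))) (η₁ η₂ : K) :
    LinearIndependent K (fun (i : Fin k) (j : Fin n) =>
      if (i : ℕ) = h then
        α (j : ℕ) ^ q ^ h + η₁ * α (j : ℕ) ^ q ^ (k + t₁) + η₂ * α (j : ℕ) ^ q ^ (k + t₂)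
      else α (j : ℕ) ^ q ^ (i : ℕ)) := by
  classical
  subst hq
  set Q := Fintype.card Fq with hQ
  have hQ2 : 2 ≤ Q := Fintype.one_lt_card
  have hQinj : Function.Injective (fun s : ℕ => Q ^ s) := Nat.pow_right_injective hQ2
  set hk : Fin k := ⟨h, hh⟩ with hhk
  rw [Fintype.linearIndependent_iff]
  intro u hu i₀
  -- the function applied pointwise
  have hu' : ∀ j : Fin n, (∑ i : Fin k, u i *
      (if (i : ℕ) = h then
        α (j : ℕ) ^ Q ^ h + η₁ * α (j : ℕ) ^ Q ^ (k + t₁) + η₂ * α (j : ℕ) ^ Q ^ (k + t₂)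
      else α (j : ℕ) ^ Q ^ (i : ℕ))) = 0 := by
    intro j
    have := congrFun hu j
    simpa [Finset.sum_apply] using this
  -- split off the twisted row
  have hsplit : ∀ x : K, (∑ i : Fin k, u i *
      (if (i : ℕ) = h then
        x ^ Q ^ h + η₁ * x ^ Q ^ (k + t₁) + η₂ * x ^ Q ^ (k + t₂)
      else x ^ Q ^ (i : ℕ))) =
      (∑ i : Fin k, u i * x ^ Q ^ (i : ℕ)) +
        (u hk * η₁) * x ^ Q ^ (k + t₁) + (u hk * η₂) * x ^ Q ^ (k + t₂) := by
    intro x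
    rw [← Finset.add_sum_erase _ _ (Finset.mem_univ hk),
      ← Finset.add_sum_erase _ (fun i : Fin k => u i * x ^ Q ^ (i : ℕ)) (Finset.mem_univ hk)]
    have h1 : ∀ i ∈ Finset.univ.erase hk, u i *
        (if (i : ℕ) = h then
          x ^ Q ^ h + η₁ * x ^ Q ^ (k + t₁) + η₂ * x ^ Q ^ (k + t₂)
        else x ^ Q ^ (i : ℕ)) = u i * x ^ Q ^ (i : ℕ) := by
      intro i hi
      rw [if_neg]
      intro hih
      exact (Finset.mem_erase.mp hi).1 (Fin.ext hih)
    rw [Finset.sum_congr rfl h1, if_pos rfl]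
    ring
  -- the q-polynomial
  set P : K[X] := (∑ i : Fin k, C (u i) * X ^ (Q ^ (i : ℕ))) +
      C (u hk * η₁) * X ^ (Q ^ (k + t₁)) + C (u hk * η₂) * X ^ (Q ^ (k + t₂)) with hP
  have hPeval : ∀ x : K, P.eval x = (∑ i : Fin k, u i * x ^ Q ^ (i : ℕ)) +
      (u hk * η₁) * x ^ Q ^ (k + t₁) + (u hk * η₂) * x ^ Q ^ (k + t₂) := by
    intro x
    simp [hP, eval_finset_sum]
  -- the associated Fq-linear map
  set φ : K →ₗ[Fq] K := (∑ i : Fin k,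
        (LinearMap.mulLeft Fq (u i)).comp (frobLin Fq (i : ℕ))) +
      (LinearMap.mulLeft Fq (u hk * η₁)).comp (frobLin Fq (k + t₁)) +
      (LinearMap.mulLeft Fq (u hk * η₂)).comp (frobLin Fq (k + t₂)) with hφ
  have hφeval : ∀ x : K, φ x = P.eval x := by
    intro x
    rw [hPeval]
    simp only [hφ, LinearMap.add_apply, LinearMap.sum_apply, LinearMap.comp_apply,
      LinearMap.mulLeft_apply, frobLin_apply]
    rfl
  have hker : Submodule.span Fq (Set.range (fun i : Fin n => α (i : ℕ))) ≤ LinearMap.ker φ := by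
    rw [Submodule.span_le]
    rintro _ ⟨j, rfl⟩
    rw [SetLike.mem_coe, LinearMap.mem_ker, hφeval, hPeval, ← hsplit]
    exact hu' j
  have hP0 : P = 0 := by
    by_contra hPne
    haveI : Fintype (Submodule.span Fq (Set.range (fun i : Fin n => α (i : ℕ)))) :=
      Fintype.ofFinite _
    have hcardS : Fintype.card (Submodule.span Fq (Set.range (fun i : Fin n => α (i : ℕ))))
        = Q ^ n := by
      rw [Module.card_fintype (Module.Basis.span hα), Fintype.card_fin]
    have hroot : ∀ x : Submodule.span Fq (Set.range (fun i : Fin n => α (i : ℕ))),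
        (x : K) ∈ P.roots.toFinset := by
      intro x
      rw [Multiset.mem_toFinset, Polynomial.mem_roots hPne]
      show P.eval (x : K) = 0
      rw [← hφeval]
      exact LinearMap.mem_ker.mp (hker x.2)
    have hinj : Function.Injective
        (fun x : Submodule.span Fq (Set.range (fun i : Fin n => α (i : ℕ))) =>
          (⟨(x : K), hroot x⟩ : {y // y ∈ P.roots.toFinset})) := by
      intro a b hab
      simp only [Subtype.mk.injEq] at hab
      exact Subtype.ext hab
    have h2 : Q ^ n ≤ P.roots.toFinset.card := by
      rw [← hcardS, ← Fintype.card_coe]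
      exact Fintype.card_le_of_injective _ hinj
    have hmax : ∀ (a : K) (s : ℕ), s < n → (C a * X ^ (Q ^ s)).natDegree ≤ Q ^ (n - 1) :=
      fun a s hs => le_trans (natDegree_C_mul_X_pow_le a _)
        (Nat.pow_le_pow_right (by omega) (by omega))
    have h4 : P.natDegree ≤ Q ^ (n - 1) := by
      rw [hP]
      refine le_trans (natDegree_add_le _ _) (max_le (le_trans (natDegree_add_le _ _)
        (max_le ?_ (hmax _ _ (by omega)))) (hmax _ _ (by omega)))
      exact natDegree_sum_le_of_forall_le _ _ (fun i _ => hmax _ _ (lt_trans i.2 hkn))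
    have h3 : P.roots.toFinset.card ≤ P.natDegree :=
      le_trans (Multiset.toFinset_card_le _) P.card_roots'
    have h5 : Q ^ (n - 1) < Q ^ n := Nat.pow_lt_pow_right (by omega) (by omega)
    omega
  -- extract coefficients
  have hco : P.coeff (Q ^ (i₀ : ℕ)) = u i₀ := by
    rw [hP]
    simp only [coeff_add, finset_sum_coeff, coeff_C_mul, coeff_X_pow]
    rw [Finset.sum_eq_single i₀]
    · rw [if_pos rfl, if_neg (fun hc : Q ^ (i₀ : ℕ) = Q ^ (k + t₁) =>
          absurd (hQinj hc) (by omega)),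
        if_neg (fun hc : Q ^ (i₀ : ℕ) = Q ^ (k + t₂) => absurd (hQinj hc) (by omega))]
      ring
    · intro i _ hi
      rw [if_neg (fun hc : Q ^ (i₀ : ℕ) = Q ^ (i : ℕ) => hi (Fin.ext (hQinj hc).symm)), mul_zero]
    · intro hx
      exact absurd (Finset.mem_univ i₀) hx
  rw [← hco, hP0, coeff_zero]

end Rows

open Matrix

/-- the twisted Gabidulin code `C₂` with two twists is MRD iff for every
full-rank `V ∈ F_q^{k×n}`,
`η₁ det(V·M^{(h,k+t₁)ᵀ}) + η₂ det(V·M^{(h,k+t₂)ᵀ}) ≠ -det(V·Mᵀ)`. -/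
theorem C2_MRD_iff {Fq K : Type*} [Field Fq] [Fintype Fq] [Field K] [Fintype K] [Algebra Fq K]
    (q m n k h t₁ t₂ : ℕ) (hq : Fintype.card Fq = q) (hK : Fintype.card K = q ^ m)
    (hkn : k < n) (hnm : n ≤ m) (hh : h < k) (ht : t₁ < t₂) (ht₂ : t₂ < n - k)
    (α : ℕ → K) (hα : LinearIndependent Fq (fun i : Fin n => α (i:ℕ)))
    (η₁ η₂ : K) (hη₁ : η₁ ≠ 0) (hη₂ : η₂ ≠ 0) :
    (sInf {w : ℕ | ∃ c ∈ Submodule.span K (Set.range (fun i : Fin k => fun j : Fin n =>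
          if (i:ℕ) = h then
            α (j:ℕ) ^ q ^ h + η₁ * α (j:ℕ) ^ q ^ (k + t₁) + η₂ * α (j:ℕ) ^ q ^ (k + t₂)
          else α (j:ℕ) ^ q ^ (i:ℕ))),
        c ≠ 0 ∧ w = Module.finrank Fq (Submodule.span Fq (Set.range c))} = n - k + 1)
    ↔
    (∀ V : Matrix (Fin k) (Fin n) Fq, V.rank = k →
      η₁ * (V.map (algebraMap Fq K) *
          Matrix.of (fun (j : Fin n) (i : Fin k) =>
            if (i:ℕ) = h then α (j:ℕ) ^ q ^ (k + t₁) else α (j:ℕ) ^ q ^ (i:ℕ))).det +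
      η₂ * (V.map (algebraMap Fq K) *
          Matrix.of (fun (j : Fin n) (i : Fin k) =>
            if (i:ℕ) = h then α (j:ℕ) ^ q ^ (k + t₂) else α (j:ℕ) ^ q ^ (i:ℕ))).det ≠
      -(V.map (algebraMap Fq K) *
          Matrix.of (fun (j : Fin n) (i : Fin k) => α (j:ℕ) ^ q ^ (i:ℕ))).det) := by
  classical
  set ι := algebraMap Fq K with hι
  set g : Fin k → Fin n → K := fun i j =>
    if (i:ℕ) = h then
      α (j:ℕ) ^ q ^ h + η₁ * α (j:ℕ) ^ q ^ (k + t₁) + η₂ * α (j:ℕ) ^ q ^ (k + t₂)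
    else α (j:ℕ) ^ q ^ (i:ℕ) with hgdef
  set N0 : Matrix (Fin n) (Fin k) K :=
    Matrix.of (fun (j : Fin n) (i : Fin k) => α (j:ℕ) ^ q ^ (i:ℕ)) with hN0
  set N1 : Matrix (Fin n) (Fin k) K :=
    Matrix.of (fun (j : Fin n) (i : Fin k) =>
      if (i:ℕ) = h then α (j:ℕ) ^ q ^ (k + t₁) else α (j:ℕ) ^ q ^ (i:ℕ)) with hN1
  set N2 : Matrix (Fin n) (Fin k) K :=
    Matrix.of (fun (j : Fin n) (i : Fin k) =>
      if (i:ℕ) = h then α (j:ℕ) ^ q ^ (k + t₂) else α (j:ℕ) ^ q ^ (i:ℕ)) with hN2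
  set NG : Matrix (Fin n) (Fin k) K := Matrix.of (fun (j : Fin n) (i : Fin k) => g i j) with hNG
  set hk : Fin k := ⟨h, hh⟩ with hhk
  have hGli : LinearIndependent K g := rowsLI q n k h t₁ t₂ hq hkn hh ht ht₂ α hα η₁ η₂
  -- multilinearity of the determinant in column h
  have hdet : ∀ V : Matrix (Fin k) (Fin n) Fq,
      (V.map ι * NG).det =
        (V.map ι * N0).det + η₁ * (V.map ι * N1).det + η₂ * (V.map ι * N2).det := by
    intro V
    have e1 : V.map ι * NG = (V.map ι * N0).updateCol hk
        ((fun i => (V.map ι * N0) i hk) + η₁ • (fun i => (V.map ι * N1) i hk)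
          + η₂ • (fun i => (V.map ι * N2) i hk)) := by
      ext i i'
      rcases eq_or_ne i' hk with rfl | hne
      · rw [Matrix.updateCol_apply, if_pos rfl]
        simp only [Pi.add_apply, Pi.smul_apply, smul_eq_mul, Matrix.mul_apply, hN0, hN1, hN2,
          hNG, Matrix.of_apply, hgdef]
        rw [Finset.mul_sum, Finset.mul_sum, ← Finset.sum_add_distrib, ← Finset.sum_add_distrib]
        refine Finset.sum_congr rfl fun j _ => ?_
        simp only [show ((hk : Fin k) : ℕ) = h from rfl, if_pos trivial, eq_self_iff_true,
          if_true]
        ring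
      · rw [Matrix.updateCol_apply, if_neg hne]
        simp only [Matrix.mul_apply, hN0, hNG, Matrix.of_apply, hgdef]
        refine Finset.sum_congr rfl fun j _ => ?_
        rw [if_neg (fun hc => hne (Fin.ext hc))]
    have e2 : (V.map ι * N0).updateCol hk (fun i => (V.map ι * N1) i hk) = V.map ι * N1 := by
      ext i i'
      rcases eq_or_ne i' hk with rfl | hne
      · rw [Matrix.updateCol_apply, if_pos rfl]
      · rw [Matrix.updateCol_apply, if_neg hne]
        simp only [Matrix.mul_apply, hN0, hN1, Matrix.of_apply]
        refine Finset.sum_congr rfl fun j _ => ?_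
        rw [if_neg (fun hc => hne (Fin.ext hc))]
    have e3 : (V.map ι * N0).updateCol hk (fun i => (V.map ι * N2) i hk) = V.map ι * N2 := by
      ext i i'
      rcases eq_or_ne i' hk with rfl | hne
      · rw [Matrix.updateCol_apply, if_pos rfl]
      · rw [Matrix.updateCol_apply, if_neg hne]
        simp only [Matrix.mul_apply, hN0, hN2, Matrix.of_apply]
        refine Finset.sum_congr rfl fun j _ => ?_
        rw [if_neg (fun hc => hne (Fin.ext hc))]
    rw [e1, Matrix.det_updateCol_add, Matrix.det_updateCol_add,
      Matrix.det_updateCol_smul, Matrix.det_updateCol_smul,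
      Matrix.updateCol_eq_self, e2, e3]
  -- matrix-vector product and codewords
  have hmulvec : ∀ (V : Matrix (Fin k) (Fin n) Fq) (u : Fin k → K),
      (V.map ι * NG) *ᵥ u = fun i => ∑ j, V i j • (∑ i' : Fin k, u i' • g i') j := by
    intro V u
    rw [← Matrix.mulVec_mulVec]
    have hNGu : NG *ᵥ u = ∑ i' : Fin k, u i' • g i' := by
      ext j
      simp only [Matrix.mulVec, dotProduct, hNG, Matrix.of_apply, Finset.sum_apply,
        Pi.smul_apply, smul_eq_mul]
      exact Finset.sum_congr rfl fun i _ => mul_comm _ _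
    rw [hNGu]
    ext i
    simp only [Matrix.mulVec, dotProduct, Matrix.map_apply, Algebra.smul_def, hι]
  constructor
  · -- MRD → determinant condition
    intro hsInf V hV
    intro hdeq
    have hdet0 : (V.map ι * NG).det = 0 := by
      rw [hdet V]
      linear_combination hdeq
    obtain ⟨u, hu0, huv⟩ := Matrix.exists_mulVec_eq_zero_iff.mpr hdet0
    rw [hmulvec V u] at huv
    set c : Fin n → K := ∑ i' : Fin k, u i' • g i' with hc
    have hcmem : c ∈ Submodule.span K (Set.range g) :=
      (Submodule.mem_span_range_iff_exists_fun K).mpr ⟨u, hc.symm⟩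
    have hcne : c ≠ 0 := by
      intro h0
      exact hu0 (funext fun i =>
        Fintype.linearIndependent_iff.mp hGli u (by rw [← hc]; exact h0) i)
    have hwin : Module.finrank Fq (Submodule.span Fq (Set.range c)) ∈
        {w : ℕ | ∃ c ∈ Submodule.span K (Set.range g),
          c ≠ 0 ∧ w = Module.finrank Fq (Submodule.span Fq (Set.range c))} :=
      ⟨c, hcmem, hcne, rfl⟩
    have hge := Nat.sInf_le hwin
    rw [hsInf] at hge
    have hli := (rank_eq_iff_rows_li V).mp hV
    have hann : ∀ i, ∑ j, V i j • c j = 0 := by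
      intro i
      have := congrFun huv i
      simpa using this
    have hwt := weight_add_le c (fun i => V i) hli hann
    omega
  · -- determinant condition → MRD
    intro hRHS
    have hP : ∀ V : Matrix (Fin k) (Fin n) Fq, V.rank = k → (V.map ι * NG).det ≠ 0 := by
      intro V hV hd0
      apply hRHS V hV
      rw [hdet V] at hd0
      linear_combination hd0
    have hlb : ∀ w ∈ {w : ℕ | ∃ c ∈ Submodule.span K (Set.range g),
        c ≠ 0 ∧ w = Module.finrank Fq (Submodule.span Fq (Set.range c))}, n - k + 1 ≤ w := by
      rintro w ⟨c, hcmem, hc0, rfl⟩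
      by_contra hlt
      push_neg at hlt
      have hwk : Module.finrank Fq (Submodule.span Fq (Set.range c)) + k ≤ n := by omega
      obtain ⟨W, hWli, hWann⟩ := exists_ann_of_weight_le c hwk
      obtain ⟨u, hu⟩ := (Submodule.mem_span_range_iff_exists_fun K).mp hcmem
      have hu0 : u ≠ 0 := by
        rintro rfl
        apply hc0
        rw [← hu]
        simp
      have hmv : ((Matrix.of W).map ι * NG) *ᵥ u = 0 := by
        rw [hmulvec (Matrix.of W) u]
        ext i
        have hcj : ∀ j, (∑ i' : Fin k, u i' • g i') j = c j := fun j => by rw [hu]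
        simp only [Matrix.of_apply, hcj]
        simpa using hWann i
      have hrk : (Matrix.of W).rank = k := (rank_eq_iff_rows_li _).mpr hWli
      exact hP _ hrk (Matrix.exists_mulVec_eq_zero_iff.mp ⟨u, hu0, hmv⟩)
    -- construct a codeword of weight exactly n - k + 1
    have hkpos : 0 < k := by omega
    let emb : Fin (k-1) → Fin n := fun j => ⟨(j:ℕ), lt_trans j.2 (by omega)⟩
    have hembinj : Function.Injective emb := by
      intro a b hab
      have h2 : ((emb a : Fin n) : ℕ) = ((emb b : Fin n) : ℕ) := congrArg Fin.val hab
      exact Fin.ext h2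
    let B : Matrix (Fin k) (Fin (k-1)) K := Matrix.of fun i j => g i (emb j)
    have hkerB : LinearMap.ker B.vecMulLinear ≠ ⊥ := by
      intro hbot
      have hinj : Function.Injective B.vecMulLinear := LinearMap.ker_eq_bot.mp hbot
      have hle := LinearMap.finrank_le_finrank_of_injective hinj
      rw [Module.finrank_pi, Module.finrank_pi, Fintype.card_fin, Fintype.card_fin] at hle
      omega
    obtain ⟨u, humem, hu0⟩ := Submodule.exists_mem_ne_zero_of_ne_bot hkerB
    set c : Fin n → K := ∑ i' : Fin k, u i' • g i' with hc
    have hcmem : c ∈ Submodule.span K (Set.range g) :=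
      (Submodule.mem_span_range_iff_exists_fun K).mpr ⟨u, hc.symm⟩
    have hc0 : c ≠ 0 := by
      intro h0
      exact hu0 (funext fun i =>
        Fintype.linearIndependent_iff.mp hGli u (by rw [← hc]; exact h0) i)
    have hcemb : ∀ j : Fin (k-1), c (emb j) = 0 := by
      intro j
      have hj := congrFun (LinearMap.mem_ker.mp humem) j
      simp only [Matrix.vecMulLinear_apply, Matrix.vecMul, dotProduct, Matrix.of_apply,
        Pi.zero_apply, B] at hj
      rw [hc]
      simp only [Finset.sum_apply, Pi.smul_apply, smul_eq_mul]
      exact hj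
    let Wf : Fin (k-1) → Fin n → Fq := fun j => Pi.single (emb j) 1
    have hWli : LinearIndependent Fq Wf := by
      have hb := (Pi.basisFun Fq (Fin n)).linearIndependent
      have h2 := hb.comp emb hembinj
      have h3 : Wf = (⇑(Pi.basisFun Fq (Fin n)) ∘ emb) := by
        funext j j'
        simp [Wf, Pi.basisFun_apply]
      rw [h3]
      exact h2
    have hWann : ∀ j : Fin (k-1), ∑ j' : Fin n, Wf j j' • c j' = 0 := by
      intro j
      show ∑ j' : Fin n, (Pi.single (emb j) (1:Fq) : Fin n → Fq) j' • c j' = 0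
      rw [Finset.sum_eq_single (emb j)]
      · rw [Pi.single_eq_same, one_smul]
        exact hcemb j
      · intro j' _ hj'
        rw [Pi.single_eq_of_ne hj', zero_smul]
      · intro hx
        exact absurd (Finset.mem_univ _) hx
    have hwle := weight_add_le c _ hWli hWann
    have hwge : n - k + 1 ≤ Module.finrank Fq (Submodule.span Fq (Set.range c)) :=
      hlb _ ⟨c, hcmem, hc0, rfl⟩
    have hmem : n - k + 1 ∈ {w : ℕ | ∃ c ∈ Submodule.span K (Set.range g),
        c ≠ 0 ∧ w = Module.finrank Fq (Submodule.span Fq (Set.range c))} :=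
      ⟨c, hcmem, hc0, by omega⟩
    exact le_antisymm (Nat.sInf_le hmem) (le_csInf ⟨_, hmem⟩ hlb)
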